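/- Let K be a compact Hausdorff space, f ∈ B_{C(K)}, μ ∈ B_{M(K)}, and 0 < σ < ε < 1. Let u, v ∈ B_{C(K)} be non-negative functions with u ≡ 1 on {f ≥ 1−σ}, u ≡ 0 on {f ≤ 1−ε}, v ≡ 1 on {f ≤ −1+σ}, v ≡ 0 on {f ≥ −1+ε}, and define μ₁, μ₂ ∈ M(K) by μ₁(g) = ∫_K g·u dμ and μ₂(g) = ∫_K g·v dμ for g ∈ C(K). Then: (1) ‖μ₁‖ ≤ 1 and ‖μ₂‖ ≤ 1; (2) ‖μ₁⁺‖ + ‖μ₂⁻‖ ≥ 1 − (1 − μ(f))/σ; (3) ‖μ₁⁻‖ + ‖μ₂⁺‖ ≤ (1 − μ(f))/σ; (4) ‖μ − μ₁ − μ₂‖ ≤ (1 − μ(f))/σ. -/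

import Mathlib

open MeasureTheory

noncomputable section

variable {K : Type*} [TopologicalSpace K] [MeasurableSpace K]

/-- The integral of a function against a signed measure. -/
def sInt (μ : SignedMeasure K) (f : K → ℝ) : ℝ :=
  ∫ x, f x ∂μ.toJordanDecomposition.posPart - ∫ x, f x ∂μ.toJordanDecomposition.negPart

/-- The total variation norm of a signed measure. -/
def mNorm (μ : SignedMeasure K) : ℝ := (μ.totalVariation Set.univ).toReal

/-- `ν` is a compensation of `μ`: if `μ(K) > 0` then `0 ≤ ν ≤ μ⁺` and `ν(K) = μ(K)`;
if `μ(K) ≤ 0` then `ν = 0`. -/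
def IsCompensation (μ ν : SignedMeasure K) : Prop :=
  if 0 < μ Set.univ then
    0 ≤ ν ∧ ν ≤ μ.toJordanDecomposition.posPart.toSignedMeasure ∧ ν Set.univ = μ Set.univ
  else ν = 0

/-- A family of signed measures indexed by a topological space is weak*-continuous. -/
def WStarContinuousFamily {T : Type*} [TopologicalSpace T] (F : T → SignedMeasure K) : Prop :=
  ∀ g : C(K, ℝ), Continuous fun t => sInt (F t) g

/-- Membership in `W(K)`: a weak*-continuous map from `K` into the closed unit ball of the
space `M(K)` of regular Borel signed measures. -/
def MemW (F : K → SignedMeasure K) : Prop :=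
  WStarContinuousFamily F ∧ ∀ t, (F t).totalVariation.Regular ∧ mNorm (F t) ≤ 1

/-- `K` admits local compensation: every element of `W(K)` admits a compensation in `W(K)`. -/
def AdmitsLocalCompensation (K : Type*) [TopologicalSpace K] [MeasurableSpace K] : Prop :=
  ∀ F : K → SignedMeasure K, MemW F →
    ∃ G : K → SignedMeasure K, MemW G ∧ ∀ t, IsCompensation (F t) (G t)

/-- The weak* topology on signed measures. -/
instance wstarTopology : TopologicalSpace (SignedMeasure K) :=
  TopologicalSpace.induced (fun μ (g : C(K, ℝ)) => sInt μ g) inferInstance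

/-- `M(K)`: the regular Borel signed measures on `K`, with the weak* topology. -/
def MK (K : Type*) [TopologicalSpace K] [MeasurableSpace K] : Type _ :=
  {μ : SignedMeasure K // μ.totalVariation.Regular}

instance : TopologicalSpace (MK K) := instTopologicalSpaceSubtype

/-- The closed unit ball `B_{M(K)}` of `M(K)`, with the weak* topology. -/
def BMK (K : Type*) [TopologicalSpace K] [MeasurableSpace K] : Type _ :=
  {μ : SignedMeasure K // μ.totalVariation.Regular ∧ mNorm μ ≤ 1}

instance : TopologicalSpace (BMK K) := instTopologicalSpaceSubtype

/-- A compensation function on `K`: a weak*-to-weak*-continuous map `ξ : M(K) → M(K)` such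
that `ξ μ` is a compensation of `μ` for every `μ ∈ M(K)`. -/
def IsCompensationFunction (ξ : MK K → MK K) : Prop :=
  Continuous ξ ∧ ∀ μ : MK K, IsCompensation μ.1 (ξ μ).1

/-- A `B_{M(K)}`-compensation function on `K`. -/
def IsBallCompensationFunction (ξ : BMK K → MK K) : Prop :=
  Continuous ξ ∧ ∀ μ : BMK K, IsCompensation μ.1 (ξ μ).1

/-- The numerical radius of an operator on a real Banach space. -/
def NumericalRadius {X : Type*} [NormedAddCommGroup X] [NormedSpace ℝ X] (T : X →L[ℝ] X) : ℝ :=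
  sSup {r | ∃ (x : X) (φ : X →L[ℝ] ℝ), ‖x‖ = 1 ∧ ‖φ‖ = 1 ∧ φ x = 1 ∧ r = |φ (T x)|}

/-- The Bishop-Phelps-Bollobás property for numerical radius, witnessed by a
given function `δ`. -/
def HasBPBNumericalRadiusWith (X : Type*) [NormedAddCommGroup X] [NormedSpace ℝ X]
    (δ : ℝ → ℝ) : Prop :=
  ∀ ε : ℝ, 0 < ε → ε < 1 →
    ∀ T : X →L[ℝ] X, NumericalRadius T = 1 →
      ∀ (x : X) (φ : X →L[ℝ] ℝ), ‖x‖ = 1 → ‖φ‖ = 1 → φ x = 1 →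
        1 - δ ε ≤ φ (T x) →
        ∃ (T₀ : X →L[ℝ] X) (x₀ : X) (φ₀ : X →L[ℝ] ℝ),
          NumericalRadius T₀ = 1 ∧ ‖x₀‖ = 1 ∧ ‖φ₀‖ = 1 ∧ φ₀ x₀ = 1 ∧
          φ₀ (T₀ x₀) = 1 ∧ NumericalRadius (T - T₀) ≤ ε ∧ ‖x - x₀‖ ≤ ε ∧ ‖φ - φ₀‖ ≤ ε

/-- The Bishop-Phelps-Bollobás property for numerical radius. -/
def HasBPBNumericalRadius (X : Type*) [NormedAddCommGroup X] [NormedSpace ℝ X] : Prop :=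
  ∃ δ : ℝ → ℝ, (∀ ε : ℝ, 0 < ε → ε < 1 → 0 < δ ε ∧ δ ε < 1) ∧ HasBPBNumericalRadiusWith X δ

/-- A closeness function for `K`: a continuous function `c` on
`{(x,y,z) ∈ K³ : y ≠ z}` with values in `[-1,1]` such that `c(x,y,z) = -c(x,z,y)`
whenever `y ≠ z` and `c(x,x,z) = 1` whenever `x ≠ z`. -/
def IsClosenessFunction (K : Type*) [TopologicalSpace K]
    (c : {p : K × K × K // p.2.1 ≠ p.2.2} → ℝ) : Prop :=
  Continuous c ∧ (∀ p, c p ∈ Set.Icc (-1 : ℝ) 1) ∧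
    (∀ (x y z : K) (h : y ≠ z), c ⟨(x, y, z), h⟩ = -c ⟨(x, z, y), h.symm⟩) ∧
    (∀ (x z : K) (h : x ≠ z), c ⟨(x, x, z), h⟩ = 1)

set_option linter.unusedSectionVars false

private lemma myInt [BorelSpace K] [CompactSpace K] (m : Measure K) [IsFiniteMeasure m]
    {g : K → ℝ} (hg : Continuous g) : Integrable g m := by
  have := hg.continuousOn.integrableOn_compact' (μ := m) isCompact_univ MeasurableSet.univ
  rwa [integrableOn_univ] at this

private lemma intmono [BorelSpace K] [CompactSpace K] (m : Measure K) [IsFiniteMeasure m]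
    {g h : K → ℝ} (hg : Continuous g) (hh : Continuous h) (hle : ∀ x, g x ≤ h x) :
    ∫ x, g x ∂m ≤ ∫ x, h x ∂m :=
  integral_mono (myInt m hg) (myInt m hh) hle

private lemma withDensity_toReal (m : Measure K) {g : K → ℝ} (hgm : Measurable g)
    (hg0 : ∀ x, 0 ≤ g x) {s : Set K} (hs : MeasurableSet s) :
    ((m.withDensity fun x => ENNReal.ofReal (g x)) s).toReal = ∫ x in s, g x ∂m := by
  rw [withDensity_apply _ hs,
    integral_eq_lintegral_of_nonneg_ae (Filter.Eventually.of_forall hg0)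
      hgm.aestronglyMeasurable]

private lemma withDensity_univ_ne_top (m : Measure K) [IsFiniteMeasure m] {g : K → ℝ}
    (hg1 : ∀ x, g x ≤ 1) :
    (m.withDensity fun x => ENNReal.ofReal (g x)) Set.univ ≠ ⊤ := by
  rw [withDensity_apply _ MeasurableSet.univ, Measure.restrict_univ]
  have hle : ∫⁻ x, ENNReal.ofReal (g x) ∂m ≤ m Set.univ := by
    calc ∫⁻ x, ENNReal.ofReal (g x) ∂m ≤ ∫⁻ _, 1 ∂m :=
          lintegral_mono fun x => ENNReal.ofReal_le_one.mpr (hg1 x)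
      _ = m Set.univ := lintegral_one
  exact ne_top_of_le_ne_top (measure_ne_top m Set.univ) hle

private lemma signed_apply (ν : SignedMeasure K) {s : Set K} (hs : MeasurableSet s) :
    ν s = (ν.toJordanDecomposition.posPart s).toReal -
      (ν.toJordanDecomposition.negPart s).toReal := by
  conv_lhs => rw [← ν.toSignedMeasure_toJordanDecomposition]
  rw [JordanDecomposition.toSignedMeasure, Measure.toSignedMeasure_sub_apply hs]
  rfl

private lemma mNorm_eq (ν : SignedMeasure K) :
    mNorm ν = (ν.toJordanDecomposition.posPart Set.univ).toReal +
      (ν.toJordanDecomposition.negPart Set.univ).toReal := by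
  rw [mNorm, SignedMeasure.totalVariation, Measure.add_apply,
    ENNReal.toReal_add (measure_ne_top _ _) (measure_ne_top _ _)]

private lemma jordan_bound (ν : SignedMeasure K) (a b : Measure K)
    (ha : a Set.univ ≠ ⊤) (hb : b Set.univ ≠ ⊤)
    (h : ∀ s : Set K, MeasurableSet s → ν s = (a s).toReal - (b s).toReal) :
    (ν.toJordanDecomposition.posPart Set.univ).toReal ≤ (a Set.univ).toReal ∧
      (ν.toJordanDecomposition.negPart Set.univ).toReal ≤ (b Set.univ).toReal := by
  obtain ⟨i, hi₁, hi₂, hi₃, hp, hn⟩ := ν.toJordanDecomposition_spec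
  constructor
  · rw [hp, SignedMeasure.toMeasureOfZeroLE_apply _ hi₂ hi₁ MeasurableSet.univ]
    simp only [ENNReal.coe_toReal, NNReal.coe_mk, Set.inter_univ]
    rw [h i hi₁]
    have h1 : (a i).toReal ≤ (a Set.univ).toReal :=
      ENNReal.toReal_mono ha (measure_mono (Set.subset_univ i))
    have h2 : (0:ℝ) ≤ (b i).toReal := ENNReal.toReal_nonneg
    linarith
  · rw [hn, SignedMeasure.toMeasureOfLEZero_apply _ hi₃ hi₁.compl MeasurableSet.univ]
    simp only [ENNReal.coe_toReal, NNReal.coe_mk, Set.inter_univ]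
    rw [h iᶜ hi₁.compl]
    have h1 : (b iᶜ).toReal ≤ (b Set.univ).toReal :=
      ENNReal.toReal_mono hb (measure_mono (Set.subset_univ iᶜ))
    have h2 : (0:ℝ) ≤ (a iᶜ).toReal := ENNReal.toReal_nonneg
    linarith

private lemma apply_le_parts (ν : SignedMeasure K) {s : Set K} (hs : MeasurableSet s) :
    ν s ≤ (ν.toJordanDecomposition.posPart Set.univ).toReal ∧
      -ν s ≤ (ν.toJordanDecomposition.negPart Set.univ).toReal := by
  rw [signed_apply ν hs]
  constructor
  · have h1 : (ν.toJordanDecomposition.posPart s).toReal ≤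
        (ν.toJordanDecomposition.posPart Set.univ).toReal :=
      ENNReal.toReal_mono (measure_ne_top _ _) (measure_mono (Set.subset_univ s))
    have h2 : (0:ℝ) ≤ (ν.toJordanDecomposition.negPart s).toReal := ENNReal.toReal_nonneg
    linarith
  · have h1 : (ν.toJordanDecomposition.negPart s).toReal ≤
        (ν.toJordanDecomposition.negPart Set.univ).toReal :=
      ENNReal.toReal_mono (measure_ne_top _ _) (measure_mono (Set.subset_univ s))
    have h2 : (0:ℝ) ≤ (ν.toJordanDecomposition.posPart s).toReal := ENNReal.toReal_nonneg
    linarith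

private lemma int_split [BorelSpace K] [CompactSpace K] (m : Measure K) [IsFiniteMeasure m]
    (u v : C(K, ℝ)) {s : Set K} (hs : MeasurableSet s) :
    ∫ x in s, (1 - u x - v x) ∂m = (m s).toReal - ∫ x in s, u x ∂m - ∫ x in s, v x ∂m := by
  have h1 : Integrable (fun x : K => (1:ℝ) - u x) (m.restrict s) :=
    ((myInt m continuous_const).sub (myInt m u.continuous)).restrict
  have h2 : Integrable (fun _ : K => (1:ℝ)) (m.restrict s) :=
    (myInt m continuous_const).restrict
  have h3 : Integrable (fun x : K => (v x : ℝ)) (m.restrict s) := (myInt m v.continuous).restrict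
  have h4 : Integrable (fun x : K => (u x : ℝ)) (m.restrict s) := (myInt m u.continuous).restrict
  rw [integral_sub h1 h3, integral_sub h2 h4, setIntegral_const]
  simp [smul_eq_mul]
  rfl

set_option maxHeartbeats 1000000 in
/-- Properties of the measures `μ₁(g) = ∫ g·u dμ` and `μ₂(g) = ∫ g·v dμ`. -/
theorem stmt3 (K : Type*) [TopologicalSpace K] [CompactSpace K] [T2Space K]
    [MeasurableSpace K] [BorelSpace K]
    (f u v : C(K, ℝ)) (μ μ₁ μ₂ : SignedMeasure K)
    (hμreg : μ.totalVariation.Regular)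
    (σ ε : ℝ) (hσ : 0 < σ) (hσε : σ < ε) (hε : ε < 1)
    (hf : ‖f‖ ≤ 1) (hμ : mNorm μ ≤ 1)
    (hu0 : 0 ≤ u) (hu1 : ‖u‖ ≤ 1) (hv0 : 0 ≤ v) (hv1 : ‖v‖ ≤ 1)
    (huA : ∀ x, 1 - σ ≤ f x → u x = 1) (huB : ∀ x, f x ≤ 1 - ε → u x = 0)
    (hvA : ∀ x, f x ≤ -1 + σ → v x = 1) (hvB : ∀ x, -1 + ε ≤ f x → v x = 0)
    (hμ₁ : ∀ s : Set K, MeasurableSet s → μ₁ s = sInt μ (s.indicator u))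
    (hμ₂ : ∀ s : Set K, MeasurableSet s → μ₂ s = sInt μ (s.indicator v)) :
    mNorm μ₁ ≤ 1 ∧ mNorm μ₂ ≤ 1 ∧
    1 - (1 - sInt μ f) / σ ≤
      (μ₁.toJordanDecomposition.posPart Set.univ).toReal +
        (μ₂.toJordanDecomposition.negPart Set.univ).toReal ∧
    (μ₁.toJordanDecomposition.negPart Set.univ).toReal +
        (μ₂.toJordanDecomposition.posPart Set.univ).toReal ≤ (1 - sInt μ f) / σ ∧
    mNorm (μ - μ₁ - μ₂) ≤ (1 - sInt μ f) / σ := by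
  have hσ1 : σ < 1 := hσε.trans hε
  set p := μ.toJordanDecomposition.posPart with hp_def
  set q := μ.toJordanDecomposition.negPart with hq_def
  -- pointwise bounds
  have hfb : ∀ x : K, |f x| ≤ 1 := fun x => by
    calc |f x| = ‖f x‖ := (Real.norm_eq_abs _).symm
      _ ≤ ‖f‖ := f.norm_coe_le_norm x
      _ ≤ 1 := hf
  have hu0' : ∀ x, 0 ≤ u x := fun x => hu0 x
  have hv0' : ∀ x, 0 ≤ v x := fun x => hv0 x
  have hu1' : ∀ x, u x ≤ 1 := fun x => by
    have h := (u.norm_coe_le_norm x).trans hu1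
    rw [Real.norm_eq_abs] at h; exact (abs_le.mp h).2
  have hv1' : ∀ x, v x ≤ 1 := fun x => by
    have h := (v.norm_coe_le_norm x).trans hv1
    rw [Real.norm_eq_abs] at h; exact (abs_le.mp h).2
  have pf2 : ∀ x, σ - (1 - f x) ≤ σ * u x := fun x => by
    by_cases h : 1 - σ ≤ f x
    · rw [huA x h]; have := (abs_le.mp (hfb x)).2; linarith
    · push_neg at h
      have h0 : 0 ≤ σ * u x := mul_nonneg hσ.le (hu0' x)
      linarith
  have pf3 : ∀ x, σ - (1 + f x) ≤ σ * v x := fun x => by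
    by_cases h : f x ≤ -1 + σ
    · rw [hvA x h]; have := (abs_le.mp (hfb x)).1; linarith
    · push_neg at h
      have h0 : 0 ≤ σ * v x := mul_nonneg hσ.le (hv0' x)
      linarith
  have pf4 : ∀ x, σ * u x ≤ 1 + f x := fun x => by
    by_cases h : f x ≤ 1 - ε
    · rw [huB x h]; have := (abs_le.mp (hfb x)).1; linarith
    · push_neg at h
      have h0 : σ * u x ≤ σ * 1 := mul_le_mul_of_nonneg_left (hu1' x) hσ.le
      linarith
  have pf5 : ∀ x, σ * v x ≤ 1 - f x := fun x => by
    by_cases h : -1 + ε ≤ f x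
    · rw [hvB x h]; have := (abs_le.mp (hfb x)).2; linarith
    · push_neg at h
      have h0 : σ * v x ≤ σ * 1 := mul_le_mul_of_nonneg_left (hv1' x) hσ.le
      linarith
  have pf6 : ∀ x, 0 ≤ 1 - u x - v x := fun x => by
    by_cases h : f x ≤ 1 - ε
    · rw [huB x h]; have := hv1' x; linarith
    · push_neg at h
      have h2 : v x = 0 := hvB x (by linarith)
      rw [h2]; have := hu1' x; linarith
  have hw1 : ∀ x, 1 - u x - v x ≤ 1 := fun x => by
    have := hu0' x; have := hv0' x; linarith
  have pf7 : ∀ x, σ * (1 - u x - v x) ≤ 1 - f x := fun x => by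
    by_cases h : 1 - σ ≤ f x
    · rw [huA x h]
      have h0 : 0 ≤ σ * v x := mul_nonneg hσ.le (hv0' x)
      have := (abs_le.mp (hfb x)).2
      nlinarith
    · push_neg at h
      have h0 : σ * (1 - u x - v x) ≤ σ * 1 :=
        mul_le_mul_of_nonneg_left (hw1 x) hσ.le
      linarith
  have pf8 : ∀ x, σ * (1 - u x - v x) ≤ 1 + f x := fun x => by
    by_cases h : f x ≤ -1 + σ
    · rw [hvA x h]
      have h0 : 0 ≤ σ * u x := mul_nonneg hσ.le (hu0' x)
      have := (abs_le.mp (hfb x)).1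
      nlinarith
    · push_neg at h
      have h0 : σ * (1 - u x - v x) ≤ σ * 1 :=
        mul_le_mul_of_nonneg_left (hw1 x) hσ.le
      linarith
  -- continuity
  have hwc : Continuous fun x : K => 1 - u x - v x :=
    (continuous_const.sub u.continuous).sub v.continuous
  have hw0 : ∀ x, 0 ≤ 1 - u x - v x := pf6
  haveI : IsFiniteMeasure p := μ.toJordanDecomposition.posPart_finite
  haveI : IsFiniteMeasure q := μ.toJordanDecomposition.negPart_finite
  -- representations
  have hrep1 : ∀ s : Set K, MeasurableSet s → μ₁ s =
      ((p.withDensity fun x => ENNReal.ofReal (u x)) s).toReal -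
      ((q.withDensity fun x => ENNReal.ofReal (u x)) s).toReal := by
    intro s hs
    rw [hμ₁ s hs]
    simp only [sInt]
    rw [← hp_def, ← hq_def, integral_indicator hs, integral_indicator hs,
      withDensity_toReal p u.continuous.measurable hu0' hs,
      withDensity_toReal q u.continuous.measurable hu0' hs]
  have hrep2 : ∀ s : Set K, MeasurableSet s → μ₂ s =
      ((p.withDensity fun x => ENNReal.ofReal (v x)) s).toReal -
      ((q.withDensity fun x => ENNReal.ofReal (v x)) s).toReal := by
    intro s hs
    rw [hμ₂ s hs]
    simp only [sInt]
    rw [← hp_def, ← hq_def, integral_indicator hs, integral_indicator hs,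
      withDensity_toReal p v.continuous.measurable hv0' hs,
      withDensity_toReal q v.continuous.measurable hv0' hs]
  have hrep3 : ∀ s : Set K, MeasurableSet s → (μ - μ₁ - μ₂) s =
      ((p.withDensity fun x => ENNReal.ofReal (1 - u x - v x)) s).toReal -
      ((q.withDensity fun x => ENNReal.ofReal (1 - u x - v x)) s).toReal := by
    intro s hs
    have e1 : (μ - μ₁ - μ₂) s = μ s - μ₁ s - μ₂ s := by
      rw [VectorMeasure.sub_apply, VectorMeasure.sub_apply]
    rw [e1, signed_apply μ hs, ← hp_def, ← hq_def, hrep1 s hs, hrep2 s hs,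
      withDensity_toReal p hwc.measurable hw0 hs,
      withDensity_toReal q hwc.measurable hw0 hs,
      withDensity_toReal p u.continuous.measurable hu0' hs,
      withDensity_toReal q u.continuous.measurable hu0' hs,
      withDensity_toReal p v.continuous.measurable hv0' hs,
      withDensity_toReal q v.continuous.measurable hv0' hs,
      int_split p u v hs, int_split q u v hs]
    ring
  -- jordan bounds
  have hJ1 := jordan_bound μ₁ _ _ (withDensity_univ_ne_top p hu1')
    (withDensity_univ_ne_top q hu1') hrep1
  have hJ2 := jordan_bound μ₂ _ _ (withDensity_univ_ne_top p hv1')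
    (withDensity_univ_ne_top q hv1') hrep2
  have hJ3 := jordan_bound (μ - μ₁ - μ₂) _ _ (withDensity_univ_ne_top p hw1)
    (withDensity_univ_ne_top q hw1) hrep3
  rw [withDensity_toReal p u.continuous.measurable hu0' MeasurableSet.univ,
    withDensity_toReal q u.continuous.measurable hu0' MeasurableSet.univ,
    setIntegral_univ, setIntegral_univ] at hJ1
  rw [withDensity_toReal p v.continuous.measurable hv0' MeasurableSet.univ,
    withDensity_toReal q v.continuous.measurable hv0' MeasurableSet.univ,
    setIntegral_univ, setIntegral_univ] at hJ2
  rw [withDensity_toReal p hwc.measurable hw0 MeasurableSet.univ,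
    withDensity_toReal q hwc.measurable hw0 MeasurableSet.univ,
    setIntegral_univ, setIntegral_univ] at hJ3
  -- integral inequalities
  have F3 : σ * (p Set.univ).toReal - ((p Set.univ).toReal - ∫ x, f x ∂p) ≤
      σ * ∫ x, u x ∂p := by
    have h := intmono p ((continuous_const.sub (continuous_const.sub f.continuous)))
      (continuous_const.mul u.continuous) pf2
    have i1 : Integrable (fun _ : K => σ) p := myInt p continuous_const
    have i2 : Integrable (fun x : K => 1 - f x) p :=
      myInt p (continuous_const.sub f.continuous)
    have i3 : Integrable (fun _ : K => (1:ℝ)) p := myInt p continuous_const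
    have i4 : Integrable (fun x : K => f x) p := myInt p f.continuous
    simp only [Pi.mul_apply, Pi.sub_apply, Pi.add_apply] at h
    rw [integral_const_mul σ, integral_sub i1 i2, integral_sub i3 i4,
      integral_const, integral_const] at h
    simp only [smul_eq_mul, mul_one, Measure.real] at h
    linarith
  have F4 : σ * (q Set.univ).toReal - ((q Set.univ).toReal + ∫ x, f x ∂q) ≤
      σ * ∫ x, v x ∂q := by
    have h := intmono q ((continuous_const.sub (continuous_const.add f.continuous)))
      (continuous_const.mul v.continuous) pf3
    have i1 : Integrable (fun _ : K => σ) q := myInt q continuous_const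
    have i2 : Integrable (fun x : K => 1 + f x) q :=
      myInt q (continuous_const.add f.continuous)
    have i3 : Integrable (fun _ : K => (1:ℝ)) q := myInt q continuous_const
    have i4 : Integrable (fun x : K => f x) q := myInt q f.continuous
    simp only [Pi.mul_apply, Pi.sub_apply, Pi.add_apply] at h
    rw [integral_const_mul σ, integral_sub i1 i2, integral_add i3 i4,
      integral_const, integral_const] at h
    simp only [smul_eq_mul, mul_one, Measure.real] at h
    linarith
  have F5 : σ * ∫ x, u x ∂q ≤ (q Set.univ).toReal + ∫ x, f x ∂q := by
    have h := intmono q (continuous_const.mul u.continuous)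
      (continuous_const.add f.continuous) pf4
    have i3 : Integrable (fun _ : K => (1:ℝ)) q := myInt q continuous_const
    have i4 : Integrable (fun x : K => f x) q := myInt q f.continuous
    simp only [Pi.mul_apply, Pi.sub_apply, Pi.add_apply] at h
    rw [integral_const_mul σ, integral_add i3 i4, integral_const] at h
    simp only [smul_eq_mul, mul_one, Measure.real] at h
    linarith
  have F6 : σ * ∫ x, v x ∂p ≤ (p Set.univ).toReal - ∫ x, f x ∂p := by
    have h := intmono p (continuous_const.mul v.continuous)
      (continuous_const.sub f.continuous) pf5
    have i3 : Integrable (fun _ : K => (1:ℝ)) p := myInt p continuous_const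
    have i4 : Integrable (fun x : K => f x) p := myInt p f.continuous
    simp only [Pi.mul_apply, Pi.sub_apply, Pi.add_apply] at h
    rw [integral_const_mul σ, integral_sub i3 i4, integral_const] at h
    simp only [smul_eq_mul, mul_one, Measure.real] at h
    linarith
  have F7p : σ * ∫ x, (1 - u x - v x) ∂p ≤ (p Set.univ).toReal - ∫ x, f x ∂p := by
    have h := intmono p (continuous_const.mul hwc)
      (continuous_const.sub f.continuous) pf7
    have i3 : Integrable (fun _ : K => (1:ℝ)) p := myInt p continuous_const
    have i4 : Integrable (fun x : K => f x) p := myInt p f.continuous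
    simp only [Pi.mul_apply, Pi.sub_apply, Pi.add_apply] at h
    rw [integral_const_mul σ, integral_sub i3 i4, integral_const] at h
    simp only [smul_eq_mul, mul_one, Measure.real] at h
    linarith
  have F7q : σ * ∫ x, (1 - u x - v x) ∂q ≤ (q Set.univ).toReal + ∫ x, f x ∂q := by
    have h := intmono q (continuous_const.mul hwc)
      (continuous_const.add f.continuous) pf8
    have i3 : Integrable (fun _ : K => (1:ℝ)) q := myInt q continuous_const
    have i4 : Integrable (fun x : K => f x) q := myInt q f.continuous
    simp only [Pi.mul_apply, Pi.sub_apply, Pi.add_apply] at h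
    rw [integral_const_mul σ, integral_add i3 i4, integral_const] at h
    simp only [smul_eq_mul, mul_one, Measure.real] at h
    linarith
  have FAle : ∫ x, u x ∂p ≤ (p Set.univ).toReal := by
    have h := intmono p u.continuous continuous_const hu1'
    rw [integral_const] at h
    simp only [smul_eq_mul, mul_one] at h
    exact h
  have FBle : ∫ x, u x ∂q ≤ (q Set.univ).toReal := by
    have h := intmono q u.continuous continuous_const hu1'
    rw [integral_const] at h; simpa [Measure.real] using h
  have FCle : ∫ x, v x ∂p ≤ (p Set.univ).toReal := by
    have h := intmono p v.continuous continuous_const hv1'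
    rw [integral_const] at h; simpa [Measure.real] using h
  have FDle : ∫ x, v x ∂q ≤ (q Set.univ).toReal := by
    have h := intmono q v.continuous continuous_const hv1'
    rw [integral_const] at h; simpa [Measure.real] using h
  -- norm of μ
  rw [mNorm_eq, ← hp_def, ← hq_def] at hμ
  -- Hahn set facts
  obtain ⟨i, hi₁, hi₂, hi₃, hpspec, hnspec⟩ := μ.toJordanDecomposition_spec
  rw [← hp_def] at hpspec
  rw [← hq_def] at hnspec
  have hqi : q i = 0 := by
    rw [hnspec, SignedMeasure.toMeasureOfLEZero_apply _ hi₃ hi₁.compl hi₁]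
    simp [Set.compl_inter_self]
  have hpic : p iᶜ = 0 := by
    rw [hpspec, SignedMeasure.toMeasureOfZeroLE_apply _ hi₂ hi₁ hi₁.compl]
    simp [Set.inter_compl_self]
  have hqr : q.restrict i = 0 := by
    rw [← Measure.measure_univ_eq_zero, Measure.restrict_apply_univ]; exact hqi
  have hpr : p.restrict iᶜ = 0 := by
    rw [← Measure.measure_univ_eq_zero, Measure.restrict_apply_univ]; exact hpic
  have hiu_q : ∫ x in i, u x ∂q = 0 := by rw [hqr, integral_zero_measure]
  have hicu_p : ∫ x in iᶜ, u x ∂p = 0 := by rw [hpr, integral_zero_measure]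
  have hiv_q : ∫ x in i, v x ∂q = 0 := by rw [hqr, integral_zero_measure]
  have hicv_p : ∫ x in iᶜ, v x ∂p = 0 := by rw [hpr, integral_zero_measure]
  have hint_up : ∫ x in i, u x ∂p = ∫ x, u x ∂p := by
    have h := integral_add_compl hi₁ (myInt p u.continuous)
    rw [hicu_p, add_zero] at h; exact h
  have hint_vq : ∫ x in iᶜ, v x ∂q = ∫ x, v x ∂q := by
    have h := integral_add_compl hi₁ (myInt q v.continuous)
    rw [hiv_q, zero_add] at h; exact h
  have hμ1i : μ₁ i = ∫ x, u x ∂p := by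
    rw [hμ₁ i hi₁]
    simp only [sInt]
    rw [← hp_def, ← hq_def, integral_indicator hi₁, integral_indicator hi₁,
      hint_up, hiu_q, sub_zero]
  have hμ2ic : μ₂ iᶜ = -∫ x, v x ∂q := by
    rw [hμ₂ iᶜ hi₁.compl]
    simp only [sInt]
    rw [← hp_def, ← hq_def, integral_indicator hi₁.compl, integral_indicator hi₁.compl,
      hicv_p, hint_vq, zero_sub]
  have h2a : ∫ x, u x ∂p ≤ (μ₁.toJordanDecomposition.posPart Set.univ).toReal := by
    have := (apply_le_parts μ₁ hi₁).1
    rwa [hμ1i] at this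
  have h2b : ∫ x, v x ∂q ≤ (μ₂.toJordanDecomposition.negPart Set.univ).toReal := by
    have := (apply_le_parts μ₂ hi₁.compl).2
    rwa [hμ2ic, neg_neg] at this
  -- final arithmetic
  have hm : sInt μ f = ∫ x, f x ∂p - ∫ x, f x ∂q := by
    simp only [sInt]
    rfl
  rw [hm]
  have hAnn : 0 ≤ ∫ x, u x ∂p := integral_nonneg hu0'
  have hBnn : 0 ≤ ∫ x, u x ∂q := integral_nonneg hu0'
  have hCnn : 0 ≤ ∫ x, v x ∂p := integral_nonneg hv0'
  have hDnn : 0 ≤ ∫ x, v x ∂q := integral_nonneg hv0'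
  have hWpnn : 0 ≤ ∫ x, (1 - u x - v x) ∂p := integral_nonneg hw0
  have hWqnn : 0 ≤ ∫ x, (1 - u x - v x) ∂q := integral_nonneg hw0
  refine ⟨?_, ?_, ?_, ?_, ?_⟩
  · rw [mNorm_eq]
    linarith [hJ1.1, hJ1.2]
  · rw [mNorm_eq]
    linarith [hJ2.1, hJ2.2]
  · have key : 1 - ((μ₁.toJordanDecomposition.posPart Set.univ).toReal +
        (μ₂.toJordanDecomposition.negPart Set.univ).toReal) ≤
        (1 - (∫ x, f x ∂p - ∫ x, f x ∂q)) / σ := by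
      rw [le_div_iff₀ hσ]
      have hh1 : σ * ∫ x, u x ∂p ≤ σ * (μ₁.toJordanDecomposition.posPart Set.univ).toReal :=
        mul_le_mul_of_nonneg_left h2a hσ.le
      have hh2 : σ * ∫ x, v x ∂q ≤ σ * (μ₂.toJordanDecomposition.negPart Set.univ).toReal :=
        mul_le_mul_of_nonneg_left h2b hσ.le
      have hh3 : 0 ≤ (1 - σ) * (1 - ((p Set.univ).toReal + (q Set.univ).toReal)) :=
        mul_nonneg (by linarith) (by linarith)
      linarith [F3, F4, hh1, hh2, hh3, hμ]
    linarith
  · rw [le_div_iff₀ hσ]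
    have hh1 : σ * (μ₁.toJordanDecomposition.negPart Set.univ).toReal ≤ σ * ∫ x, u x ∂q :=
      mul_le_mul_of_nonneg_left hJ1.2 hσ.le
    have hh2 : σ * (μ₂.toJordanDecomposition.posPart Set.univ).toReal ≤ σ * ∫ x, v x ∂p :=
      mul_le_mul_of_nonneg_left hJ2.1 hσ.le
    linarith [F5, F6, hh1, hh2, hμ]
  · rw [mNorm_eq, le_div_iff₀ hσ]
    have hh1 : σ * ((μ - μ₁ - μ₂).toJordanDecomposition.posPart Set.univ).toReal ≤
        σ * ∫ x, (1 - u x - v x) ∂p := mul_le_mul_of_nonneg_left hJ3.1 hσ.le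
    have hh2 : σ * ((μ - μ₁ - μ₂).toJordanDecomposition.negPart Set.univ).toReal ≤
        σ * ∫ x, (1 - u x - v x) ∂q := mul_le_mul_of_nonneg_left hJ3.2 hσ.le
    linarith [F7p, F7q, hh1, hh2, hμ]

end
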